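/- Fix β ≥ 0 and define f(α, β) := (β/α − α/2)(Arg(1 + c(1+i)) − Arg(1 − c(1+i))) for α with 0 < α < √(2β), where c := (α/(2β))(2+β²−2√(1+β²))^{1/4}. Then f(α, β) ≤ f(0, β) = (2+β²−2√(1+β²))^{1/4} < √(1+√(1+β²)), where f(0, β) is the limit of f(α, β) as α ↓ 0. -/

import Mathlib

open Real Filter

set_option maxHeartbeats 1000000

lemma my_arctan_nonneg {x : ℝ} (hx : 0 ≤ x) : 0 ≤ Real.arctan x := by
  simpa using Real.arctan_strictMono.monotone hx

lemma my_arctan_le {x : ℝ} (hx : 0 ≤ x) : Real.arctan x ≤ x := by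
  calc Real.arctan x ≤ Real.tan (Real.arctan x) :=
        Real.le_tan (my_arctan_nonneg hx) (Real.arctan_lt_pi_div_two x)
    _ = x := Real.tan_arctan x

lemma my_arg_eq (a b : ℝ) (ha : 0 < a) :
    Complex.arg ((a : ℂ) + (b : ℂ) * Complex.I) = Real.arctan (b / a) := by
  set z : ℂ := (a:ℂ) + (b:ℂ)*Complex.I with hz
  have hre : z.re = a := by simp [hz]
  have him : z.im = b := by simp [hz]
  have habs : |Complex.arg z| < Real.pi/2 :=
    Complex.abs_arg_lt_pi_div_two_iff.2 (Or.inl (by rw [hre]; exact ha))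
  have ht := Complex.tan_arg z
  rw [hre, him] at ht
  rw [← ht, Real.arctan_tan (by linarith [(abs_lt.1 habs).1]) (abs_lt.1 habs).2]

/-- arg (1 + c(1+I)) - arg (1 - c(1+I)) for 0 ≤ c < 1. -/
lemma my_arg_diff (c : ℝ) (hc0 : 0 ≤ c) (hc1 : c < 1) :
    Complex.arg (1 + (c : ℂ) * (1 + Complex.I)) -
      Complex.arg (1 - (c : ℂ) * (1 + Complex.I)) =
    Real.arctan (c / (1 + c)) + Real.arctan (c / (1 - c)) := by
  have h1 : (1 : ℂ) + (c : ℂ) * (1 + Complex.I)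
      = ((1 + c : ℝ) : ℂ) + ((c : ℝ) : ℂ) * Complex.I := by push_cast; ring
  have h2 : (1 : ℂ) - (c : ℂ) * (1 + Complex.I)
      = ((1 - c : ℝ) : ℂ) + ((-c : ℝ) : ℂ) * Complex.I := by push_cast; ring
  rw [h1, h2, my_arg_eq _ _ (by linarith), my_arg_eq _ _ (by linarith)]
  rw [neg_div, Real.arctan_neg]
  ring

theorem stmt4 (β : ℝ) (hβ : 0 ≤ β) (f : ℝ → ℝ)
    (hf : ∀ α : ℝ, f α = (β / α - α / 2) *
      (Complex.arg (1 + ((α / (2 * β) *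
          Real.sqrt (Real.sqrt (2 + β ^ 2 - 2 * Real.sqrt (1 + β ^ 2))) : ℝ) : ℂ) *
          (1 + Complex.I)) -
       Complex.arg (1 - ((α / (2 * β) *
          Real.sqrt (Real.sqrt (2 + β ^ 2 - 2 * Real.sqrt (1 + β ^ 2))) : ℝ) : ℂ) *
          (1 + Complex.I)))) :
    (∀ α : ℝ, 0 < α → α < Real.sqrt (2 * β) →
      f α ≤ Real.sqrt (Real.sqrt (2 + β ^ 2 - 2 * Real.sqrt (1 + β ^ 2)))) ∧
    Filter.Tendsto f (nhdsWithin 0 (Set.Ioi 0))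
      (nhds (Real.sqrt (Real.sqrt (2 + β ^ 2 - 2 * Real.sqrt (1 + β ^ 2))))) ∧
    Real.sqrt (Real.sqrt (2 + β ^ 2 - 2 * Real.sqrt (1 + β ^ 2))) <
      Real.sqrt (1 + Real.sqrt (1 + β ^ 2)) := by
  have hs0 : (0:ℝ) ≤ 1 + β ^ 2 := by positivity
  set s : ℝ := Real.sqrt (1 + β ^ 2) with hs
  have hs2 : s ^ 2 = 1 + β ^ 2 := Real.sq_sqrt hs0
  have hsnn : 0 ≤ s := Real.sqrt_nonneg _
  have hs1 : 1 ≤ s := by nlinarith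
  have hsβ : s ≤ 1 + β := by nlinarith
  have hinner : 2 + β ^ 2 - 2 * s = (s - 1) ^ 2 := by nlinarith
  have hks : Real.sqrt (2 + β ^ 2 - 2 * s) = s - 1 := by
    rw [hinner, Real.sqrt_sq (by linarith)]
  rw [hks] at hf ⊢
  set k : ℝ := Real.sqrt (s - 1) with hkdef
  have hk0 : 0 ≤ k := Real.sqrt_nonneg _
  have hk2 : k ^ 2 = s - 1 := Real.sq_sqrt (by linarith)
  have hk2b : k ^ 2 ≤ 2 * β := by nlinarith
  refine ⟨?_, ?_, ?_⟩
  · -- inequality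
    intro α hα hαs
    have hα2 : α ^ 2 < 2 * β := by
      have := (Real.lt_sqrt hα.le).1 hαs
      linarith
    have hβ0 : 0 < β := by nlinarith
    set c : ℝ := α / (2 * β) * k with hc
    clear_value c
    have hc0 : 0 ≤ c := by rw [hc]; positivity
    have hck : c * (2 * β) = α * k := by rw [hc]; field_simp
    have hcsq : c ^ 2 * (2 * β) ≤ α ^ 2 := by
      have h1 : c ^ 2 * (2 * β) * (2 * β) = α ^ 2 * k ^ 2 := by
        linear_combination (c * (2 * β) + α * k) * hck
      nlinarith [h1, mul_le_mul_of_nonneg_left hk2b (sq_nonneg α), hβ0]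
    have hc1 : c < 1 := by nlinarith [hcsq, hα2, hβ0, sq_nonneg (c - 1)]
    have ht : 0 ≤ β / α - α / 2 := by
      rw [sub_nonneg, div_le_div_iff₀ (by norm_num) hα]
      nlinarith
    rw [hf α, ← hc, my_arg_diff c hc0 hc1]
    have hA : Real.arctan (c / (1 + c)) ≤ c / (1 + c) :=
      my_arctan_le (div_nonneg hc0 (by linarith))
    have hB : Real.arctan (c / (1 - c)) ≤ c / (1 - c) :=
      my_arctan_le (div_nonneg hc0 (by linarith))
    have hd : (0:ℝ) < 1 - c ^ 2 := by nlinarith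
    have hsum : Real.arctan (c / (1 + c)) + Real.arctan (c / (1 - c))
        ≤ 2 * c / (1 - c ^ 2) := by
      have he : c / (1 + c) + c / (1 - c) = 2 * c / (1 - c ^ 2) := by
        rw [div_add_div _ _ (by positivity : (1:ℝ) + c ≠ 0) (by nlinarith : (1:ℝ) - c ≠ 0)]
        rw [show (1+c)*(1-c) = 1 - c^2 by ring]
        ring_nf
      linarith [add_le_add hA hB, he]
    have hstep : (β / α - α / 2) * (2 * c / (1 - c ^ 2)) ≤ k := by
      rw [← mul_div_assoc, div_le_iff₀ hd]
      have key : (β / α - α / 2) * (2 * c) = k - c * α := by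
        field_simp
        nlinarith [hck]
      rw [key]
      have hkc : k * c ≤ α := by
        have h1 : k * c * (2 * β) = α * k ^ 2 := by nlinarith [hck]
        have h2 : α * k ^ 2 ≤ α * (2 * β) := by nlinarith
        nlinarith
      nlinarith [mul_le_mul_of_nonneg_left hkc hc0]
    calc (β / α - α / 2) * (Real.arctan (c / (1 + c)) + Real.arctan (c / (1 - c)))
        ≤ (β / α - α / 2) * (2 * c / (1 - c ^ 2)) :=
          mul_le_mul_of_nonneg_left hsum ht
      _ ≤ k := hstep
  · -- limit
    rcases eq_or_lt_of_le hβ with hβ0 | hβ0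
    · -- β = 0
      have hβz : β = 0 := hβ0.symm
      subst hβz
      have hsz : s = 1 := by rw [hs]; norm_num
      have hkz : k = 0 := by rw [hkdef, hsz]; simp
      have hfz : ∀ α : ℝ, f α = 0 := by
        intro α
        rw [hf α]
        norm_num [hkz]
      rw [hkz]
      exact tendsto_const_nhds.congr fun α => (hfz α).symm
    · -- β > 0
      set m : ℝ := k / (2 * β) with hm
      have hm0 : 0 ≤ m := by positivity
      set F : ℝ → ℝ := fun a => Real.arctan (m * a / (1 + m * a))
        + Real.arctan (m * a / (1 - m * a)) with hF
      have hF0 : F 0 = 0 := by simp [hF]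
      have hlin : HasDerivAt (fun a : ℝ => m * a) m 0 := by
        simpa using (hasDerivAt_id (0:ℝ)).const_mul m
      have hu : HasDerivAt (fun a : ℝ => m * a / (1 + m * a)) m 0 := by
        have h2 : HasDerivAt (fun a : ℝ => 1 + m * a) m 0 := by
          simpa using hlin.const_add 1
        have := hlin.div h2 (by norm_num)
        simpa [Pi.div_def] using this
      have hv : HasDerivAt (fun a : ℝ => m * a / (1 - m * a)) m 0 := by
        have h2 : HasDerivAt (fun a : ℝ => 1 - m * a) (-m) 0 := by
          simpa using hlin.const_sub 1
        have := hlin.div h2 (by norm_num)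
        simpa [Pi.div_def] using this
      have hφ : HasDerivAt (fun a : ℝ => Real.arctan (m * a / (1 + m * a))) m 0 := by
        have := (Real.hasDerivAt_arctan ((fun a : ℝ => m * a / (1 + m * a)) 0)).comp 0 hu
        simpa [Function.comp_def] using this
      have hψ : HasDerivAt (fun a : ℝ => Real.arctan (m * a / (1 - m * a))) m 0 := by
        have := (Real.hasDerivAt_arctan ((fun a : ℝ => m * a / (1 - m * a)) 0)).comp 0 hv
        simpa [Function.comp_def] using this
      have hD : HasDerivAt F (m + m) 0 := hφ.add hψ
      have hslope : Tendsto (fun α => F α / α) (nhdsWithin 0 (Set.Ioi 0))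
          (nhds (m + m)) := by
        have h1 := hasDerivAt_iff_tendsto_slope.1 hD
        have h2 : Tendsto (slope F 0) (nhdsWithin 0 (Set.Ioi 0)) (nhds (m + m)) :=
          h1.mono_left (nhdsWithin_mono 0 fun x hx => ne_of_gt hx)
        refine h2.congr fun α => ?_
        rw [slope_def_field, hF0]
        ring_nf
      have hFcont : Tendsto F (nhdsWithin 0 (Set.Ioi 0)) (nhds 0) := by
        have := hD.continuousAt.tendsto
        rw [hF0] at this
        exact this.mono_left nhdsWithin_le_nhds
      have hsmall : Tendsto (fun α : ℝ => α / 2 * F α) (nhdsWithin 0 (Set.Ioi 0))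
          (nhds 0) := by
        have h1 : Tendsto (fun α : ℝ => α / 2) (nhdsWithin 0 (Set.Ioi 0)) (nhds 0) := by
          have : Tendsto (fun α : ℝ => α / 2) (nhds 0) (nhds (0 / 2)) :=
            (continuous_id.div_const 2).tendsto 0
          simpa using this.mono_left nhdsWithin_le_nhds
        simpa using h1.mul hFcont
      have hg : Tendsto (fun α : ℝ => β * (F α / α) - α / 2 * F α)
          (nhdsWithin 0 (Set.Ioi 0)) (nhds (β * (m + m) - 0)) :=
        (hslope.const_mul β).sub hsmall
      have hval : β * (m + m) - 0 = k := by
        rw [hm]; field_simp; ring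
      rw [hval] at hg
      refine hg.congr' ?_
      have hmem : Set.Ioo (0:ℝ) (1 / (m + 1)) ∈ nhdsWithin 0 (Set.Ioi 0) :=
        Ioo_mem_nhdsGT_of_mem ⟨le_refl _, by positivity⟩
      filter_upwards [hmem] with α hα
      have hα0 : 0 < α := hα.1
      have hα1 : α * (m + 1) < 1 := by
        rw [← lt_div_iff₀ (by positivity : (0:ℝ) < m + 1)]
        exact hα.2
      have hma : m * α < 1 := by nlinarith
      have hceq : α / (2 * β) * k = m * α := by rw [hm]; field_simp
      rw [hf α, hceq, my_arg_diff (m * α) (by positivity) hma]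
      show β * (F α / α) - α / 2 * F α = (β / α - α / 2) * F α
      field_simp
  · -- strict inequality
    rw [hkdef]
    exact Real.sqrt_lt_sqrt (by linarith) (by linarith)
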